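/- There exist constants c₁, c₂ > 0, depending only on d and m_φ, such that for all n ∈ ℕ₀ the function p_n(x) := (1/n!) Σ_{H∈𝒢_n} κ_n(H) J_n(H,x) satisfies ‖p_n‖∞ ≤ c₁·c₂^n and ‖p_n‖₁ ≤ c₁·c₂^n. (These p_n are the coefficients of the power-series expansion of the pair-connectedness function P_t of the random connection model at intensity t = 0.) -/

import Mathlib

open MeasureTheory Finset
open scoped ENNReal Classical

noncomputable section

/-- The interior vertices `{1,…,n}` of the vertex set `{0,1,…,n+1}` (as `Fin (n+2)`). -/
def interiorVerts (n : ℕ) : Finset (Fin (n + 2)) :=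
  Finset.univ.filter fun v => v ≠ 0 ∧ v ≠ Fin.last (n + 1)

/-- `ConnIn G a b S` : there is a path from `a` to `b` in `G` using only
vertices in `S ∪ {a, b}`. -/
def ConnIn {k : ℕ} (G : SimpleGraph (Fin k)) (a b : Fin k) (S : Set (Fin k)) : Prop :=
  ∃ w : G.Walk a b, ∀ v ∈ w.support, v = a ∨ v = b ∨ v ∈ S

/-- `π_n(G) = Σ_{I ⊆ [n]} (-1)^{n-|I|} 1{0 ↔ n+1 in G|I}`. -/
def piFun (n : ℕ) (G : SimpleGraph (Fin (n + 2))) : ℤ :=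
  ∑ I ∈ (interiorVerts n).powerset,
    (-1 : ℤ) ^ (n - I.card) *
      (if ConnIn G 0 (Fin.last (n + 1)) ↑I then 1 else 0)

/-- The number of edges of `G`, counted via ordered pairs `i < j`. -/
def edgeCount {k : ℕ} (G : SimpleGraph (Fin k)) : ℕ :=
  (Finset.univ.filter fun p : Fin k × Fin k => p.1 < p.2 ∧ G.Adj p.1 p.2).card

/-- `κ_n(H) = Σ_{G ∈ 𝒢_n, E(G) ⊆ E(H)} (-1)^{|E(H)|-|E(G)|} π_n(G)`. -/
def kappaFun (n : ℕ) (H : SimpleGraph (Fin (n + 2))) : ℤ :=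
  ∑ G ∈ Finset.univ.filter
      (fun G : SimpleGraph (Fin (n + 2)) => G.Connected ∧ G ≤ H),
    (-1 : ℤ) ^ (edgeCount H - edgeCount G) * piFun n G

/-- The point configuration `x₀ = 0`, `x₁,…,x_n = xs`, `x_{n+1} = x`. -/
def pts {d n : ℕ} (x : EuclideanSpace ℝ (Fin d)) (xs : Fin n → EuclideanSpace ℝ (Fin d)) :
    Fin (n + 2) → EuclideanSpace ℝ (Fin d) :=
  Fin.cons 0 (Fin.snoc xs x)

/-- `∏_{{i,j} ∈ E(G)} φ(y_i - y_j)`, product over ordered pairs `i < j`. -/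
def edgeProd {d k : ℕ} (φ : EuclideanSpace ℝ (Fin d) → ℝ)
    (G : SimpleGraph (Fin k)) (y : Fin k → EuclideanSpace ℝ (Fin d)) : ℝ :=
  ∏ p ∈ Finset.univ.filter (fun p : Fin k × Fin k => p.1 < p.2 ∧ G.Adj p.1 p.2),
    φ (y p.1 - y p.2)

/-- `J_n(G,x) = ∫ ∏_{{i,j} ∈ E(G)} φ(x_i - x_j) d(x₁,…,x_n)` with `x₀ = 0`, `x_{n+1} = x`. -/
def Jfun {d : ℕ} (φ : EuclideanSpace ℝ (Fin d) → ℝ) (n : ℕ)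
    (G : SimpleGraph (Fin (n + 2))) (x : EuclideanSpace ℝ (Fin d)) : ℝ :=
  ∫ xs : Fin n → EuclideanSpace ℝ (Fin d), edgeProd φ G (pts x xs)

/-- `I_n(G,x) = ∫ ∏_{{i,j} ∈ E(G)} φ(x_i-x_j) ∏_{{i,j} ∉ E(G)} (1 - φ(x_i-x_j)) d(x₁,…,x_n)`. -/
def Ifun {d : ℕ} (φ : EuclideanSpace ℝ (Fin d) → ℝ) (n : ℕ)
    (G : SimpleGraph (Fin (n + 2))) (x : EuclideanSpace ℝ (Fin d)) : ℝ :=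
  ∫ xs : Fin n → EuclideanSpace ℝ (Fin d),
    edgeProd φ G (pts x xs) *
      ∏ p ∈ Finset.univ.filter
          (fun p : Fin (n + 2) × Fin (n + 2) => p.1 < p.2 ∧ ¬ G.Adj p.1 p.2),
        (1 - φ (pts x xs p.1 - pts x xs p.2))

/-- `p_n(x) = (1/n!) Σ_{H ∈ 𝒢_n} κ_n(H) J_n(H,x)`. -/
def pFun {d : ℕ} (φ : EuclideanSpace ℝ (Fin d) → ℝ) (n : ℕ)
    (x : EuclideanSpace ℝ (Fin d)) : ℝ :=
  (Nat.factorial n : ℝ)⁻¹ *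
    ∑ H ∈ Finset.univ.filter (fun H : SimpleGraph (Fin (n + 2)) => H.Connected),
      (kappaFun n H : ℝ) * Jfun φ n H x



namespace PfunAux

variable {k : ℕ}

/-- The edge-pair set of a graph: ordered pairs `i < j` with `i ~ j`. -/
def EP (G : SimpleGraph (Fin k)) : Finset (Fin k × Fin k) :=
  Finset.univ.filter fun p => p.1 < p.2 ∧ G.Adj p.1 p.2

lemma mem_EP {G : SimpleGraph (Fin k)} {p : Fin k × Fin k} :
    p ∈ EP G ↔ p.1 < p.2 ∧ G.Adj p.1 p.2 := by simp [EP]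

lemma edgeCount_eq (G : SimpleGraph (Fin k)) : edgeCount G = (EP G).card := rfl

lemma edgeProd_eq {d : ℕ} (φ : EuclideanSpace ℝ (Fin d) → ℝ) (G : SimpleGraph (Fin k))
    (y : Fin k → EuclideanSpace ℝ (Fin d)) :
    edgeProd φ G y = ∏ p ∈ EP G, φ (y p.1 - y p.2) := rfl

/-- The non-edge pairs. -/
def NEP (G : SimpleGraph (Fin k)) : Finset (Fin k × Fin k) :=
  Finset.univ.filter fun p => p.1 < p.2 ∧ ¬ G.Adj p.1 p.2

lemma mem_NEP {G : SimpleGraph (Fin k)} {p : Fin k × Fin k} :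
    p ∈ NEP G ↔ p.1 < p.2 ∧ ¬ G.Adj p.1 p.2 := by simp [NEP]

lemma EP_mono {G H : SimpleGraph (Fin k)} (h : G ≤ H) : EP G ⊆ EP H := by
  intro p hp
  rw [mem_EP] at hp ⊢
  exact ⟨hp.1, h hp.2⟩

lemma disjoint_EP_NEP (G : SimpleGraph (Fin k)) : Disjoint (EP G) (NEP G) := by
  rw [Finset.disjoint_left]
  intro p hp hp'
  rw [mem_EP] at hp; rw [mem_NEP] at hp'
  exact hp'.2 hp.2

/-- The graph whose edges are given by a set of ordered pairs. -/
def ofPairs (S : Finset (Fin k × Fin k)) : SimpleGraph (Fin k) where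
  Adj i j := i ≠ j ∧ ((i, j) ∈ S ∨ (j, i) ∈ S)
  symm := by constructor; intro i j h; exact ⟨Ne.symm h.1, h.2.symm⟩
  loopless := by constructor; intro i h; exact h.1 rfl

lemma EP_sup_ofPairs {B : SimpleGraph (Fin k)} {S : Finset (Fin k × Fin k)}
    (hS : S ⊆ NEP B) : EP (B ⊔ ofPairs S) = EP B ∪ S := by
  ext p
  simp only [mem_EP, Finset.mem_union, SimpleGraph.sup_adj]
  constructor
  · rintro ⟨hlt, hB | hO⟩
    · exact Or.inl ⟨hlt, hB⟩
    · rcases hO.2 with h | h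
      · exact Or.inr h
      · exact absurd (mem_NEP.1 (hS h)).1 (by exact fun hh => absurd (hh.trans hlt) (lt_irrefl _))
  · rintro (hB | hSp)
    · exact ⟨hB.1, Or.inl hB.2⟩
    · have h' := mem_NEP.1 (hS hSp)
      refine ⟨h'.1, Or.inr ⟨ne_of_lt h'.1, Or.inl ?_⟩⟩
      simpa using hSp

lemma sup_ofPairs_diff (B H : SimpleGraph (Fin k)) (hBH : B ≤ H) :
    B ⊔ ofPairs (EP H \ EP B) = H := by
  ext i j
  simp only [SimpleGraph.sup_adj, ofPairs, Finset.mem_sdiff, mem_EP]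
  constructor
  · rintro (h | ⟨hne, h | h⟩)
    · exact hBH h
    · exact h.1.2
    · exact h.1.2.symm
  · intro h
    by_cases hB : B.Adj i j
    · exact Or.inl hB
    · refine Or.inr ⟨h.ne, ?_⟩
      rcases lt_trichotomy i j with hlt | heq | hgt
      · exact Or.inl ⟨⟨hlt, h⟩, fun hc => hB hc.2⟩
      · exact absurd heq h.ne
      · exact Or.inr ⟨⟨hgt, h.symm⟩, fun hc => hB hc.2.symm⟩

lemma diff_subset_NEP {B H : SimpleGraph (Fin k)} : EP H \ EP B ⊆ NEP B := by
  intro p hp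
  rw [Finset.mem_sdiff, mem_EP] at hp
  rw [mem_NEP]
  exact ⟨hp.1.1, fun hc => hp.2 (mem_EP.2 ⟨hp.1.1, hc⟩)⟩

/-- Reindexing a sum over supergraphs of `B` as a sum over sets of added non-edges. -/
lemma sum_supergraphs (B : SimpleGraph (Fin k)) (t : Finset (Fin k × Fin k) → ℝ) :
    ∑ H ∈ Finset.univ.filter (fun H : SimpleGraph (Fin k) => B ≤ H), t (EP H)
      = ∑ S ∈ (NEP B).powerset, t (EP B ∪ S) := by
  refine Finset.sum_nbij' (fun H => EP H \ EP B) (fun S => B ⊔ ofPairs S) ?_ ?_ ?_ ?_ ?_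
  · intro H hH
    rw [Finset.mem_filter] at hH
    exact Finset.mem_powerset.2 diff_subset_NEP
  · intro S hS
    exact Finset.mem_filter.2 ⟨Finset.mem_univ _, le_sup_left⟩
  · intro H hH
    rw [Finset.mem_filter] at hH
    exact sup_ofPairs_diff B H hH.2
  · intro S hS
    rw [Finset.mem_powerset] at hS
    rw [EP_sup_ofPairs hS, Finset.union_sdiff_cancel_left]
    exact Finset.disjoint_left.2 fun p hp hp' => (mem_NEP.1 (hS hp')).2 (mem_EP.1 hp).2
  · intro H hH
    rw [Finset.mem_filter] at hH
    congr 1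
    rw [Finset.union_sdiff_of_subset (EP_mono hH.2)]

end PfunAux

namespace PfunAux

variable {k : ℕ}

lemma NEP_eq_sdiff (G : SimpleGraph (Fin k)) :
    NEP G = (Finset.univ.filter fun p : Fin k × Fin k => p.1 < p.2) \ EP G := by
  ext p
  simp only [mem_NEP, Finset.mem_sdiff, Finset.mem_filter, Finset.mem_univ, true_and, mem_EP]
  tauto

/-- Signed sum over supergraphs: `∑_{H ⊇ B} (-1)^{e(H)-e(B)} ∏_{E(H)} f = ∏_{E(B)} f ∏_{NE(B)} (1-f)`. -/
lemma sum_supergraphs_sign (B : SimpleGraph (Fin k)) (f : Fin k × Fin k → ℝ) :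
    ∑ H ∈ Finset.univ.filter (fun H : SimpleGraph (Fin k) => B ≤ H),
        (-1 : ℝ) ^ (edgeCount H - edgeCount B) * ∏ p ∈ EP H, f p
      = (∏ p ∈ EP B, f p) * ∏ p ∈ NEP B, (1 - f p) := by
  have := sum_supergraphs B (fun S => (-1 : ℝ) ^ (S.card - (EP B).card) * ∏ p ∈ S, f p)
  simp only [edgeCount_eq]
  rw [this]
  have : ∀ S ∈ (NEP B).powerset,
      (-1 : ℝ) ^ ((EP B ∪ S).card - (EP B).card) * ∏ p ∈ EP B ∪ S, f p
        = (∏ p ∈ EP B, f p) * ∏ p ∈ S, (-1) * f p := by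
    intro S hS
    rw [Finset.mem_powerset] at hS
    have hdisj : Disjoint (EP B) S :=
      (disjoint_EP_NEP B).mono_right hS
    rw [Finset.card_union_of_disjoint hdisj, Finset.prod_union hdisj, Nat.add_sub_cancel_left,
      Finset.prod_mul_distrib, Finset.prod_const]
    ring
  rw [Finset.sum_congr rfl this, ← Finset.mul_sum]
  congr 1
  have hpa := Finset.prod_add (fun p : Fin k × Fin k => (-1 : ℝ) * f p) (fun _ => (1 : ℝ)) (NEP B)
  simp only [Finset.prod_const_one, mul_one] at hpa
  rw [show (fun p : Fin k × Fin k => (1 : ℝ) - f p) = fun p => (-1) * f p + 1 by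
    funext p; ring]
  rw [hpa]

/-- Sum over supergraphs of products over edges and non-edges. -/
lemma sum_supergraphs_two (B : SimpleGraph (Fin k)) (f g : Fin k × Fin k → ℝ) :
    ∑ H ∈ Finset.univ.filter (fun H : SimpleGraph (Fin k) => B ≤ H),
        (∏ p ∈ EP H, f p) * ∏ p ∈ NEP H, g p
      = (∏ p ∈ EP B, f p) * ∏ p ∈ NEP B, (f p + g p) := by
  have key : ∀ H : SimpleGraph (Fin k),
      (∏ p ∈ EP H, f p) * ∏ p ∈ NEP H, g p
        = (fun S => (∏ p ∈ S, f p) *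
            ∏ p ∈ (Finset.univ.filter fun p : Fin k × Fin k => p.1 < p.2) \ S, g p) (EP H) := by
    intro H; dsimp only; rw [← NEP_eq_sdiff]
  rw [Finset.sum_congr rfl (fun H _ => key H),
    sum_supergraphs B (fun S => (∏ p ∈ S, f p) *
      ∏ p ∈ (Finset.univ.filter fun p : Fin k × Fin k => p.1 < p.2) \ S, g p)]
  have : ∀ S ∈ (NEP B).powerset,
      (∏ p ∈ EP B ∪ S, f p) *
          ∏ p ∈ (Finset.univ.filter fun p : Fin k × Fin k => p.1 < p.2) \ (EP B ∪ S), g p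
        = (∏ p ∈ EP B, f p) * ((∏ p ∈ S, f p) * ∏ p ∈ NEP B \ S, g p) := by
    intro S hS
    rw [Finset.mem_powerset] at hS
    have hdisj : Disjoint (EP B) S := (disjoint_EP_NEP B).mono_right hS
    rw [Finset.prod_union hdisj]
    have hsd : (Finset.univ.filter fun p : Fin k × Fin k => p.1 < p.2) \ (EP B ∪ S)
        = NEP B \ S := by
      rw [NEP_eq_sdiff]
      ext p
      simp only [Finset.mem_sdiff, Finset.mem_union, Finset.mem_filter, Finset.mem_univ, true_and]
      tauto
    rw [hsd, mul_assoc]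
  rw [Finset.sum_congr rfl this, ← Finset.mul_sum]
  congr 1
  rw [Finset.prod_add f g (NEP B)]

end PfunAux

namespace PfunAux

/-- The combinatorial identity `∑_H κ(H) ∏_{E(H)} f = ∑_G π(G) ∏_{E(G)} f ∏_{∉E(G)} (1-f)`. -/
lemma kappa_sum_eq (n : ℕ) (f : Fin (n + 2) × Fin (n + 2) → ℝ) :
    ∑ H ∈ Finset.univ.filter (fun H : SimpleGraph (Fin (n + 2)) => H.Connected),
        (kappaFun n H : ℝ) * ∏ p ∈ EP H, f p
      = ∑ G ∈ Finset.univ.filter (fun G : SimpleGraph (Fin (n + 2)) => G.Connected),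
          (piFun n G : ℝ) * ((∏ p ∈ EP G, f p) * ∏ p ∈ NEP G, (1 - f p)) := by
  have expand : ∀ H : SimpleGraph (Fin (n + 2)),
      (kappaFun n H : ℝ) * ∏ p ∈ EP H, f p
        = ∑ G ∈ Finset.univ.filter
            (fun G : SimpleGraph (Fin (n + 2)) => G.Connected ∧ G ≤ H),
            (-1 : ℝ) ^ (edgeCount H - edgeCount G) * (piFun n G : ℝ) * ∏ p ∈ EP H, f p := by
    intro H
    rw [kappaFun]
    push_cast
    rw [Finset.sum_mul]
  rw [Finset.sum_congr rfl fun H _ => expand H]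
  rw [Finset.sum_filter]
  have hconn : ∀ H : SimpleGraph (Fin (n + 2)),
      (if H.Connected then
          ∑ G ∈ Finset.univ.filter
            (fun G : SimpleGraph (Fin (n + 2)) => G.Connected ∧ G ≤ H),
            (-1 : ℝ) ^ (edgeCount H - edgeCount G) * (piFun n G : ℝ) * ∏ p ∈ EP H, f p
        else 0)
        = ∑ G ∈ Finset.univ,
            if G.Connected ∧ G ≤ H then
              (-1 : ℝ) ^ (edgeCount H - edgeCount G) * (piFun n G : ℝ) * ∏ p ∈ EP H, f p
            else 0 := by
    intro H
    rw [← Finset.sum_filter]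
    by_cases h : H.Connected
    · rw [if_pos h]
    · rw [if_neg h]
      symm
      apply Finset.sum_eq_zero
      intro G hG
      rw [Finset.mem_filter] at hG
      exact absurd (hG.2.1.mono hG.2.2) h
  rw [Finset.sum_congr rfl fun H _ => hconn H, Finset.sum_comm]
  have inner : ∀ G : SimpleGraph (Fin (n + 2)),
      ∑ H ∈ Finset.univ,
          (if G.Connected ∧ G ≤ H then
            (-1 : ℝ) ^ (edgeCount H - edgeCount G) * (piFun n G : ℝ) * ∏ p ∈ EP H, f p
          else 0)
        = if G.Connected then
            (piFun n G : ℝ) * ((∏ p ∈ EP G, f p) * ∏ p ∈ NEP G, (1 - f p))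
          else 0 := by
    intro G
    by_cases hG : G.Connected
    · rw [if_pos hG]
      have : ∀ H : SimpleGraph (Fin (n + 2)),
          (if G.Connected ∧ G ≤ H then
            (-1 : ℝ) ^ (edgeCount H - edgeCount G) * (piFun n G : ℝ) * ∏ p ∈ EP H, f p
          else 0)
          = if G ≤ H then
              (-1 : ℝ) ^ (edgeCount H - edgeCount G) * (piFun n G : ℝ) * ∏ p ∈ EP H, f p
            else 0 := by
        intro H
        by_cases h : G ≤ H
        · rw [if_pos ⟨hG, h⟩, if_pos h]
        · rw [if_neg (fun hc => h hc.2), if_neg h]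
      rw [Finset.sum_congr rfl fun H _ => this H, ← Finset.sum_filter]
      have := sum_supergraphs_sign G f
      calc ∑ H ∈ Finset.univ.filter (fun H : SimpleGraph (Fin (n + 2)) => G ≤ H),
              (-1 : ℝ) ^ (edgeCount H - edgeCount G) * (piFun n G : ℝ) * ∏ p ∈ EP H, f p
          = (piFun n G : ℝ) * ∑ H ∈ Finset.univ.filter
              (fun H : SimpleGraph (Fin (n + 2)) => G ≤ H),
              (-1 : ℝ) ^ (edgeCount H - edgeCount G) * ∏ p ∈ EP H, f p := by
            rw [Finset.mul_sum]
            exact Finset.sum_congr rfl fun H _ => by ring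
        _ = _ := by rw [this]
    · rw [if_neg hG]
      apply Finset.sum_eq_zero
      intro H _
      rw [if_neg (fun hc => hG hc.1)]
  rw [Finset.sum_congr rfl fun G _ => inner G, ← Finset.sum_filter]

lemma card_interiorVerts (n : ℕ) : (interiorVerts n).card = n := by
  have : interiorVerts n = Finset.univ \ {0, Fin.last (n + 1)} := by
    ext v
    simp only [interiorVerts, Finset.mem_filter, Finset.mem_univ, true_and, Finset.mem_sdiff,
      Finset.mem_insert, Finset.mem_singleton]
    tauto
  rw [this, Finset.card_sdiff_of_subset (Finset.subset_univ _)]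
  have h01 : (0 : Fin (n + 2)) ≠ Fin.last (n + 1) := by
    intro h
    have := congrArg Fin.val h
    simp [Fin.last] at this
  rw [Finset.card_insert_of_notMem (by simpa using h01), Finset.card_singleton]
  simp

lemma abs_piFun_le (n : ℕ) (G : SimpleGraph (Fin (n + 2))) :
    |piFun n G| ≤ 2 ^ n := by
  rw [piFun]
  calc |∑ I ∈ (interiorVerts n).powerset, (-1 : ℤ) ^ (n - I.card) *
          (if ConnIn G 0 (Fin.last (n + 1)) ↑I then 1 else 0)|
      ≤ ∑ I ∈ (interiorVerts n).powerset, |(-1 : ℤ) ^ (n - I.card) *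
          (if ConnIn G 0 (Fin.last (n + 1)) ↑I then 1 else 0)| :=
        Finset.abs_sum_le_sum_abs _ _
    _ ≤ ∑ _I ∈ (interiorVerts n).powerset, 1 := by
        apply Finset.sum_le_sum
        intro I _
        rw [abs_mul, abs_pow, abs_neg, abs_one, one_pow, one_mul]
        split <;> simp
    _ = 2 ^ n := by
        rw [Finset.sum_const, Finset.card_powerset, card_interiorVerts]
        simp

end PfunAux

namespace PfunAux

/-- A parent function on `{0,…,n+1}`: fixes `0` and all iterates reach `0`. -/
def Gful (n : ℕ) (a : Fin (n + 2) → Fin (n + 2)) : Prop :=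
  a 0 = 0 ∧ ∀ v, a^[n + 2] v = 0

lemma Gful.zero_of_fixed {n : ℕ} {a : Fin (n + 2) → Fin (n + 2)} (ha : Gful n a)
    {v : Fin (n + 2)} (h : a v = v) : v = 0 := by
  have := Function.iterate_fixed h (n + 2)
  rw [ha.2 v] at this
  exact this.symm

lemma Gful.ne_self {n : ℕ} {a : Fin (n + 2) → Fin (n + 2)} (ha : Gful n a)
    {v : Fin (n + 2)} (h : v ≠ 0) : a v ≠ v := fun hc => h (ha.zero_of_fixed hc)

lemma Gful.no_two_cycle {n : ℕ} {a : Fin (n + 2) → Fin (n + 2)} (ha : Gful n a)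
    {u v : Fin (n + 2)} (h1 : a u = v) (h2 : a v = u) : u = v := by
  by_contra hne
  have key : ∀ k, a^[k] u = u ∨ a^[k] u = v := by
    intro k
    induction k with
    | zero => exact Or.inl rfl
    | succ k ih =>
      rw [Function.iterate_succ_apply']
      rcases ih with h | h
      · rw [h, h1]; exact Or.inr rfl
      · rw [h, h2]; exact Or.inl rfl
  rcases key (n + 2) with h | h <;> rw [ha.2 u] at h
  · apply hne
    rw [← h] at h1 ⊢
    rw [ha.1] at h1
    exact h1
  · apply hne
    rw [← h] at h2 ⊢
    rw [ha.1] at h2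
    exact h2.symm

/-- In a nonempty set avoiding `0`, some element has no `a`-preimage in the set. -/
lemma Gful.exists_no_preimage {n : ℕ} {a : Fin (n + 2) → Fin (n + 2)} (ha : Gful n a)
    {s : Finset (Fin (n + 2))} (hs : s.Nonempty) (h0 : (0 : Fin (n + 2)) ∉ s) :
    ∃ v ∈ s, ∀ w ∈ s, a w ≠ v := by
  by_contra hc
  push_neg at hc
  obtain ⟨v₀, hv₀⟩ := hs
  have F : ∀ v : {v // v ∈ s}, {w : {v // v ∈ s} // a w.1 = v.1} := fun v =>
    ⟨⟨(hc v.1 v.2).choose, (hc v.1 v.2).choose_spec.1⟩, (hc v.1 v.2).choose_spec.2⟩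
  let g : ℕ → {v // v ∈ s} := fun k => (fun w => (F w).1)^[k] ⟨v₀, hv₀⟩
  have key : ∀ k, a^[k] (g k).1 = v₀ := by
    intro k
    induction k with
    | zero => rfl
    | succ k ih =>
      have hg : g (k + 1) = (F (g k)).1 := Function.iterate_succ_apply' _ _ _
      rw [Function.iterate_succ_apply, hg, (F (g k)).2, ih]
  have := key (n + 2)
  rw [ha.2] at this
  rw [← this] at hv₀
  exact h0 hv₀

/-- Every connected graph admits a gradable parent function along its edges. -/
lemma exists_witness {n : ℕ} {G : SimpleGraph (Fin (n + 2))} (hG : G.Connected) :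
    ∃ a : Fin (n + 2) → Fin (n + 2), Gful n a ∧ ∀ v, v ≠ 0 → G.Adj v (a v) := by
  have claim : ∀ v : Fin (n + 2), v ≠ 0 → ∃ u, G.Adj v u ∧ G.dist u 0 < G.dist v 0 := by
    intro v hv
    obtain ⟨p, hp⟩ := (hG.preconnected v 0).exists_walk_length_eq_dist
    obtain ⟨u, hadj, q, rfl⟩ := SimpleGraph.Walk.exists_eq_cons_of_ne hv p
    refine ⟨u, hadj, lt_of_le_of_lt (SimpleGraph.dist_le q) ?_⟩
    rw [← hp, SimpleGraph.Walk.length_cons]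
    omega
  classical
  set a : Fin (n + 2) → Fin (n + 2) :=
    fun v => if h : v = 0 then 0 else (claim v h).choose with ha_def
  have ha0 : a 0 = 0 := by simp [ha_def]
  have hadj : ∀ v, v ≠ 0 → G.Adj v (a v) := by
    intro v hv
    simp only [ha_def, dif_neg hv]
    exact (claim v hv).choose_spec.1
  have hdist : ∀ v, v ≠ 0 → G.dist (a v) 0 < G.dist v 0 := by
    intro v hv
    simp only [ha_def, dif_neg hv]
    exact (claim v hv).choose_spec.2
  have key : ∀ k, ∀ v : Fin (n + 2), G.dist v 0 ≤ k → a^[k] v = 0 := by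
    intro k
    induction k with
    | zero =>
      intro v hv
      have : G.dist v 0 = 0 := Nat.le_zero.1 hv
      rcases (SimpleGraph.dist_eq_zero_iff_eq_or_not_reachable).1 this with h | h
      · exact h
      · exact absurd (hG.preconnected v 0) h
    | succ k ih =>
      intro v hv
      by_cases h : v = 0
      · subst h
        rw [Function.iterate_succ_apply, ha0]
        exact ih 0 (by rw [SimpleGraph.dist_self]; omega)
      · rw [Function.iterate_succ_apply]
        exact ih (a v) (by have := hdist v h; omega)
  refine ⟨a, ⟨ha0, fun v => key (n + 2) v ?_⟩, hadj⟩
  obtain ⟨p, hp⟩ := (hG.preconnected v 0).exists_walk_length_eq_dist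
  have h1 : G.dist v 0 ≤ p.bypass.length := SimpleGraph.dist_le _
  have h2 : p.bypass.length < n + 2 := by
    have := SimpleGraph.Walk.IsPath.length_lt p.bypass_isPath
    simpa using this
  omega

/-- The tree graph associated with a parent function. -/
def treeGraph (n : ℕ) (a : Fin (n + 2) → Fin (n + 2)) : SimpleGraph (Fin (n + 2)) where
  Adj u v := u ≠ v ∧ (a u = v ∨ a v = u)
  symm := by constructor; intro u v h; exact ⟨h.1.symm, h.2.symm⟩
  loopless := by constructor; intro u h; exact h.1 rfl

lemma treeGraph_le {n : ℕ} {a : Fin (n + 2) → Fin (n + 2)} {G : SimpleGraph (Fin (n + 2))}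
    (ha : Gful n a) (h : ∀ v, v ≠ 0 → G.Adj v (a v)) : treeGraph n a ≤ G := by
  rintro u v ⟨hne, h1 | h1⟩
  · have hu : u ≠ 0 := by
      intro hc; subst hc; rw [ha.1] at h1; exact hne h1
    exact h1 ▸ h u hu
  · have hv : v ≠ 0 := by
      intro hc; subst hc; rw [ha.1] at h1; exact hne h1.symm
    exact (h1 ▸ h v hv).symm

/-- The ordered pair representing the tree edge at `v`. -/
def pm {n : ℕ} (a : Fin (n + 2) → Fin (n + 2)) (v : Fin (n + 2)) : Fin (n + 2) × Fin (n + 2) :=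
  if v < a v then (v, a v) else (a v, v)

lemma EP_treeGraph {n : ℕ} {a : Fin (n + 2) → Fin (n + 2)} (ha : Gful n a) :
    EP (treeGraph n a)
      = (Finset.univ.filter fun v : Fin (n + 2) => v ≠ 0).image (pm a) := by
  ext p
  simp only [mem_EP, Finset.mem_image, Finset.mem_filter, Finset.mem_univ, true_and]
  constructor
  · rintro ⟨hlt, hne, h1 | h1⟩
    · refine ⟨p.1, ?_, ?_⟩
      · intro hc
        rw [hc, ha.1] at h1
        rw [hc, ← h1] at hlt
        exact absurd hlt (lt_irrefl _)
      · rw [pm, h1, if_pos hlt]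
    · refine ⟨p.2, ?_, ?_⟩
      · intro hc
        rw [hc] at hlt
        exact Fin.not_lt_zero _ hlt
      · rw [pm, h1]
        rw [if_neg (by exact fun hc => absurd (hlt.trans hc) (lt_irrefl _))]
  · rintro ⟨v, hv, rfl⟩
    have hne := ha.ne_self hv
    rw [pm]
    by_cases h : v < a v
    · rw [if_pos h]
      exact ⟨h, (ne_of_lt h), Or.inl rfl⟩
    · rw [if_neg h]
      have h' : a v < v := lt_of_le_of_ne (not_lt.1 h) hne
      exact ⟨h', ne_of_lt h', Or.inr rfl⟩

lemma pm_injOn {n : ℕ} {a : Fin (n + 2) → Fin (n + 2)} (ha : Gful n a) :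
    ∀ u ∈ (Finset.univ.filter fun v : Fin (n + 2) => v ≠ 0),
      ∀ v ∈ (Finset.univ.filter fun v : Fin (n + 2) => v ≠ 0),
        pm a u = pm a v → u = v := by
  intro u hu v hv h
  rw [pm, pm] at h
  split_ifs at h with h1 h2 h2
  · exact (Prod.ext_iff.1 h).1
  · exact ha.no_two_cycle (Prod.ext_iff.1 h).2 ((Prod.ext_iff.1 h).1).symm
  · exact ha.no_two_cycle (Prod.ext_iff.1 h).1 ((Prod.ext_iff.1 h).2).symm
  · exact (Prod.ext_iff.1 h).2

/-- Rewriting a product over tree edges as a product over non-root vertices. -/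
lemma prod_EP_tree {n : ℕ} {M : Type*} [CommMonoid M] {a : Fin (n + 2) → Fin (n + 2)}
    (ha : Gful n a) (F : Fin (n + 2) × Fin (n + 2) → M)
    (hsym : ∀ u v, F (u, v) = F (v, u)) :
    ∏ p ∈ EP (treeGraph n a), F p
      = ∏ v ∈ Finset.univ.filter (fun v : Fin (n + 2) => v ≠ 0), F (v, a v) := by
  rw [EP_treeGraph ha, Finset.prod_image (pm_injOn ha)]
  apply Finset.prod_congr rfl
  intro v hv
  rw [pm]
  split_ifs with h
  · rfl
  · exact hsym _ _

end PfunAux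

namespace PfunAux

variable {d : ℕ}

/-- The tree-factor product `∏_{w ∈ K} ψ(y_w - y_{a(w)})`. -/
def Fk {k : ℕ} (ψ : EuclideanSpace ℝ (Fin d) → ℝ≥0∞) (a : Fin k → Fin k)
    (K : Finset (Fin k)) (y : Fin k → EuclideanSpace ℝ (Fin d)) : ℝ≥0∞ :=
  ∏ w ∈ K, ψ (y w - y (a w))

lemma measurable_Fk {k : ℕ} {ψ : EuclideanSpace ℝ (Fin d) → ℝ≥0∞} (hψm : Measurable ψ)
    (a : Fin k → Fin k) (K : Finset (Fin k)) : Measurable (Fk ψ a K) :=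
  Finset.measurable_prod _ fun w _ =>
    hψm.comp ((measurable_pi_apply w).sub (measurable_pi_apply (a w)))

lemma Fk_le_one {k : ℕ} {ψ : EuclideanSpace ℝ (Fin d) → ℝ≥0∞} (hψ1 : ∀ z, ψ z ≤ 1)
    (a : Fin k → Fin k) (K : Finset (Fin k)) (y : Fin k → EuclideanSpace ℝ (Fin d)) :
    Fk ψ a K y ≤ 1 :=
  Finset.prod_le_one (fun _ _ => zero_le) (fun w _ => hψ1 _)

/-- The key integration bound: iterated integrals of tree factors are bounded by `(∫ψ)^|s|`. -/
lemma lmarginal_Fk_le {n : ℕ} {ψ : EuclideanSpace ℝ (Fin d) → ℝ≥0∞}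
    (hψm : Measurable ψ) (hψ1 : ∀ z, ψ z ≤ 1) (hψtop : (∫⁻ z, ψ z) ≠ ⊤)
    {a : Fin (n + 2) → Fin (n + 2)} (ha : Gful n a) :
    ∀ (m : ℕ) (s K : Finset (Fin (n + 2))), s.card = m → s ⊆ K →
      (0 : Fin (n + 2)) ∉ s → ∀ y,
      (∫⋯∫⁻_s, Fk ψ a K) y ≤ (∫⁻ z, ψ z) ^ m := by
  intro m
  induction m with
  | zero =>
    intro s K hcard hsK h0 y
    rw [Finset.card_eq_zero] at hcard
    subst hcard
    rw [lmarginal_empty, pow_zero]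
    exact Fk_le_one hψ1 a K y
  | succ m ih =>
    intro s K hcard hsK h0 y
    have hne : s.Nonempty := by rw [← Finset.card_pos, hcard]; omega
    obtain ⟨v, hvs, hvnp⟩ := ha.exists_no_preimage hne h0
    have hv0 : v ≠ 0 := fun hc => h0 (hc ▸ hvs)
    have hav : a v ≠ v := ha.ne_self hv0
    set K' := K.filter (fun w => w ≠ v ∧ a w ≠ v) with hK'
    have hins : s = insert v (s.erase v) := (Finset.insert_erase hvs).symm
    rw [hins, lmarginal_insert' _ (measurable_Fk hψm a K) (Finset.notMem_erase v s)]
    have inner_le : ∀ z : Fin (n + 2) → EuclideanSpace ℝ (Fin d),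
        (∫⁻ t, Fk ψ a K (Function.update z v t)) ≤ (∫⁻ z', ψ z') * Fk ψ a K' z := by
      intro z
      have hpt : ∀ t, Fk ψ a K (Function.update z v t)
          ≤ ψ (t - z (a v)) * Fk ψ a K' z := by
        intro t
        rw [Fk, ← Finset.prod_filter_mul_prod_filter_not K (fun w => w ≠ v ∧ a w ≠ v)]
        have h1 : ∏ w ∈ K.filter (fun w => w ≠ v ∧ a w ≠ v),
            ψ (Function.update z v t w - Function.update z v t (a w)) = Fk ψ a K' z := by
          apply Finset.prod_congr rfl
          intro w hw
          rw [Finset.mem_filter] at hw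
          rw [Function.update_of_ne hw.2.1, Function.update_of_ne hw.2.2]
        have h2 : ∏ w ∈ K.filter (fun w => ¬(w ≠ v ∧ a w ≠ v)),
            ψ (Function.update z v t w - Function.update z v t (a w))
              ≤ ψ (t - z (a v)) := by
          have hvmem : v ∈ K.filter (fun w => ¬(w ≠ v ∧ a w ≠ v)) := by
            rw [Finset.mem_filter]
            exact ⟨hsK hvs, by simp⟩
          rw [← Finset.mul_prod_erase _ _ hvmem, Function.update_self,
            Function.update_of_ne hav]
          calc ψ (t - z (a v)) * ∏ w ∈ (K.filter (fun w => ¬(w ≠ v ∧ a w ≠ v))).erase v,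
                ψ (Function.update z v t w - Function.update z v t (a w))
              ≤ ψ (t - z (a v)) * 1 := by
                gcongr
                exact Finset.prod_le_one (fun _ _ => zero_le) (fun w _ => hψ1 _)
            _ = ψ (t - z (a v)) := mul_one _
        rw [h1, mul_comm]
        exact mul_le_mul_left h2 _
      calc ∫⁻ t, Fk ψ a K (Function.update z v t)
          ≤ ∫⁻ t, ψ (t - z (a v)) * Fk ψ a K' z := lintegral_mono hpt
        _ = ∫⁻ t, Fk ψ a K' z * ψ (t - z (a v)) := by simp_rw [mul_comm]
        _ = Fk ψ a K' z * ∫⁻ t, ψ (t - z (a v)) :=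
            lintegral_const_mul' _ _ (lt_of_le_of_lt (Fk_le_one hψ1 a K' z) ENNReal.one_lt_top).ne
        _ = Fk ψ a K' z * ∫⁻ z', ψ z' := by
            rw [lintegral_sub_right_eq_self ψ (z (a v))]
        _ = (∫⁻ z', ψ z') * Fk ψ a K' z := mul_comm _ _
    calc (∫⋯∫⁻_(s.erase v), fun z => ∫⁻ t, Fk ψ a K (Function.update z v t)) y
        ≤ (∫⋯∫⁻_(s.erase v), fun z => (∫⁻ z', ψ z') * Fk ψ a K' z) y :=
          lmarginal_mono (fun z => inner_le z) y
      _ = (∫⁻ z', ψ z') * (∫⋯∫⁻_(s.erase v), Fk ψ a K') y := by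
          rw [lmarginal, lmarginal]
          exact lintegral_const_mul' _ _ hψtop
      _ ≤ (∫⁻ z', ψ z') * (∫⁻ z', ψ z') ^ m := by
          gcongr
          refine ih (s.erase v) K' ?_ ?_ ?_ y
          · rw [Finset.card_erase_of_mem hvs, hcard]; rfl
          · intro w hw
            have hws : w ∈ s := Finset.mem_of_mem_erase hw
            rw [hK', Finset.mem_filter]
            exact ⟨hsK hws, Finset.ne_of_mem_erase hw, hvnp w hws⟩
          · exact fun hc => h0 (Finset.mem_of_mem_erase hc)
      _ = (∫⁻ z', ψ z') ^ (m + 1) := (pow_succ' _ _).symm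

end PfunAux

namespace PfunAux

lemma mem_interiorVerts {n : ℕ} {v : Fin (n + 2)} :
    v ∈ interiorVerts n ↔ v ≠ 0 ∧ v ≠ Fin.last (n + 1) := by
  simp [interiorVerts]

/-- The equivalence between `Fin n` and the interior vertices. -/
def intEquiv (n : ℕ) : Fin n ≃ {x // x ∈ interiorVerts n} where
  toFun i := ⟨(i.castSucc).succ, mem_interiorVerts.2
    ⟨Fin.succ_ne_zero _, by
      intro h
      rw [← Fin.succ_last, Fin.succ_inj] at h
      exact absurd h (ne_of_lt (Fin.castSucc_lt_last i))⟩⟩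
  invFun v := ⟨(v.1 : ℕ) - 1, by
    have h1 := (mem_interiorVerts.1 v.2).1
    have h2 := (mem_interiorVerts.1 v.2).2
    have h3 : (v.1 : ℕ) < n + 2 := v.1.isLt
    have h4 : (v.1 : ℕ) ≠ 0 := fun hc => h1 (Fin.ext hc)
    have h5 : (v.1 : ℕ) ≠ n + 1 := fun hc => h2 (Fin.ext (by simp [Fin.last, hc]))
    omega⟩
  left_inv i := by
    apply Fin.ext
    simp
  right_inv v := by
    have h1 := (mem_interiorVerts.1 v.2).1
    have h4 : (v.1 : ℕ) ≠ 0 := fun hc => h1 (Fin.ext hc)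
    apply Subtype.ext
    apply Fin.ext
    simp only [Fin.val_succ, Fin.coe_castSucc]
    omega

lemma pts_zero {d n : ℕ} (x : EuclideanSpace ℝ (Fin d)) (xs : Fin n → EuclideanSpace ℝ (Fin d)) :
    pts x xs 0 = 0 := rfl

lemma pts_last {d n : ℕ} (x : EuclideanSpace ℝ (Fin d)) (xs : Fin n → EuclideanSpace ℝ (Fin d)) :
    pts x xs (Fin.last (n + 1)) = x := by
  rw [← Fin.succ_last, pts, Fin.cons_succ, Fin.snoc_last]

lemma pts_interior {d n : ℕ} (x : EuclideanSpace ℝ (Fin d))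
    (xs : Fin n → EuclideanSpace ℝ (Fin d)) (i : Fin n) :
    pts x xs ((i.castSucc).succ) = xs i := by
  rw [pts, Fin.cons_succ, Fin.snoc_castSucc]

lemma last_not_mem_interior (n : ℕ) : Fin.last (n + 1) ∉ interiorVerts n := by
  simp [mem_interiorVerts]

lemma zero_not_mem_interior (n : ℕ) : (0 : Fin (n + 2)) ∉ interiorVerts n := by
  simp [mem_interiorVerts]

/-- Translation: integrating over the interior coordinates. -/
lemma lintegral_pts {d : ℕ} (n : ℕ) (F : (Fin (n + 2) → EuclideanSpace ℝ (Fin d)) → ℝ≥0∞)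
    (hF : Measurable F) (x : EuclideanSpace ℝ (Fin d)) :
    ∫⁻ xs : Fin n → EuclideanSpace ℝ (Fin d), F (pts x xs)
      = (∫⋯∫⁻_(interiorVerts n), F) (pts x fun _ => 0) := by
  rw [lmarginal]
  have hmp := measurePreserving_piCongrLeft
    (fun _ : {x // x ∈ interiorVerts n} => (volume : Measure (EuclideanSpace ℝ (Fin d))))
    (intEquiv n)
  have hmeas : Measurable fun y : {x // x ∈ interiorVerts n} → EuclideanSpace ℝ (Fin d) =>
      F (Function.updateFinset (pts x fun _ => 0) (interiorVerts n) y) :=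
    hF.comp measurable_updateFinset
  rw [← hmp.lintegral_comp hmeas]
  rw [show (Measure.pi fun _ : Fin n => (volume : Measure (EuclideanSpace ℝ (Fin d))))
    = volume from (volume_pi).symm]
  apply lintegral_congr
  intro xs
  congr 1
  funext v
  by_cases hv : v ∈ interiorVerts n
  · obtain ⟨i, hi⟩ := (intEquiv n).surjective ⟨v, hv⟩
    have : Function.updateFinset (pts x fun _ => 0) (interiorVerts n)
        (MeasurableEquiv.piCongrLeft (fun _ => EuclideanSpace ℝ (Fin d)) (intEquiv n) xs) v
        = (MeasurableEquiv.piCongrLeft (fun _ => EuclideanSpace ℝ (Fin d)) (intEquiv n) xs)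
            ⟨v, hv⟩ := by
      simp [Function.updateFinset, hv]
    rw [this, ← hi, MeasurableEquiv.coe_piCongrLeft, Equiv.piCongrLeft_apply_apply]
    have hv2 : (i.castSucc).succ = v := congrArg Subtype.val hi
    rw [← hv2, pts_interior]
  · have : Function.updateFinset (pts x fun _ => 0) (interiorVerts n)
        (MeasurableEquiv.piCongrLeft (fun _ => EuclideanSpace ℝ (Fin d)) (intEquiv n) xs) v
        = pts x (fun _ => 0) v := by
      simp [Function.updateFinset, hv]
    rw [this]
    rw [mem_interiorVerts] at hv
    push_neg at hv
    by_cases h0 : v = 0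
    · subst h0; rw [pts_zero, pts_zero]
    · have hl : v = Fin.last (n + 1) := hv h0
      subst hl; rw [pts_last, pts_last]

lemma pts_apply_ne_last {d n : ℕ} (x : EuclideanSpace ℝ (Fin d)) {v : Fin (n + 2)}
    (h : v ≠ Fin.last (n + 1)) :
    pts x (fun _ : Fin n => (0 : EuclideanSpace ℝ (Fin d))) v = 0 := by
  induction v using Fin.cases with
  | zero => rfl
  | succ j =>
    induction j using Fin.lastCases with
    | last => exact absurd (Fin.succ_last n ▸ rfl) h
    | cast i => rw [pts_interior]

lemma pts_zero_fun_eq_update {d n : ℕ} (x : EuclideanSpace ℝ (Fin d)) :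
    (pts x fun _ : Fin n => (0 : EuclideanSpace ℝ (Fin d)))
      = Function.update (fun _ => (0 : EuclideanSpace ℝ (Fin d))) (Fin.last (n + 1)) x := by
  funext v
  by_cases h : v = Fin.last (n + 1)
  · subst h
    rw [pts_last, Function.update_self]
  · rw [Function.update_of_ne h, pts_apply_ne_last x h]

/-- Translation for integrating over `x` as well. -/
lemma lintegral_lintegral_pts {d : ℕ} (n : ℕ)
    (F : (Fin (n + 2) → EuclideanSpace ℝ (Fin d)) → ℝ≥0∞) (hF : Measurable F) :
    ∫⁻ x : EuclideanSpace ℝ (Fin d), ∫⁻ xs : Fin n → EuclideanSpace ℝ (Fin d), F (pts x xs)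
      = (∫⋯∫⁻_(insert (Fin.last (n + 1)) (interiorVerts n)), F)
          (fun _ => (0 : EuclideanSpace ℝ (Fin d))) := by
  rw [lmarginal_insert _ hF (last_not_mem_interior n)]
  apply lintegral_congr
  intro x
  rw [lintegral_pts n F hF x, pts_zero_fun_eq_update]

end PfunAux

namespace PfunAux

lemma ofReal_prod' {ι : Type*} (s : Finset ι) (f : ι → ℝ) (hf : ∀ i ∈ s, 0 ≤ f i) :
    ENNReal.ofReal (∏ i ∈ s, f i) = ∏ i ∈ s, ENNReal.ofReal (f i) := by
  induction s using Finset.cons_induction with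
  | empty => simp
  | cons i s hi ih =>
    rw [Finset.prod_cons, Finset.prod_cons,
      ENNReal.ofReal_mul (hf i (Finset.mem_cons_self i s)),
      ih fun j hj => hf j (Finset.mem_cons.2 (Or.inr hj))]

variable {d : ℕ}

lemma measurable_pts_apply {n : ℕ} (x : EuclideanSpace ℝ (Fin d)) (v : Fin (n + 2)) :
    Measurable fun xs : Fin n → EuclideanSpace ℝ (Fin d) => pts x xs v := by
  induction v using Fin.cases with
  | zero => simp only [pts_zero]; exact measurable_const
  | succ j =>
    induction j using Fin.lastCases with
    | last =>
      simp only [Fin.succ_last, pts_last]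
      exact measurable_const
    | cast i =>
      simp only [pts_interior]
      exact measurable_pi_apply i

/-- The witness parent function of a graph. -/
def wit (n : ℕ) (G : SimpleGraph (Fin (n + 2))) : Fin (n + 2) → Fin (n + 2) :=
  if h : G.Connected then (exists_witness h).choose else fun _ => 0

lemma Gful_wit (n : ℕ) (G : SimpleGraph (Fin (n + 2))) : Gful n (wit n G) := by
  rw [wit]
  split_ifs with h
  · exact (exists_witness h).choose_spec.1
  · exact ⟨rfl, fun v => by rw [Function.iterate_succ_apply']⟩

lemma adj_wit {n : ℕ} {G : SimpleGraph (Fin (n + 2))} (h : G.Connected) :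
    ∀ v, v ≠ 0 → G.Adj v (wit n G v) := by
  rw [wit, dif_pos h]
  exact (exists_witness h).choose_spec.2

/-- Grouping the sum over connected graphs by their witness functions. -/
lemma sum_W_le_sum_tree (n : ℕ) (f : Fin (n + 2) × Fin (n + 2) → ℝ)
    (hf0 : ∀ p, 0 ≤ f p) (hf1 : ∀ p, f p ≤ 1) (hsym : ∀ u v, f (u, v) = f (v, u)) :
    ∑ G ∈ Finset.univ.filter (fun G : SimpleGraph (Fin (n + 2)) => G.Connected),
        (∏ p ∈ EP G, f p) * ∏ p ∈ NEP G, (1 - f p)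
      ≤ ∑ a ∈ Finset.univ.filter (fun a : Fin (n + 2) → Fin (n + 2) => Gful n a),
          ∏ v ∈ Finset.univ.filter (fun v : Fin (n + 2) => v ≠ 0), f (v, a v) := by
  have hW0 : ∀ G : SimpleGraph (Fin (n + 2)),
      0 ≤ (∏ p ∈ EP G, f p) * ∏ p ∈ NEP G, (1 - f p) :=
    fun G => mul_nonneg (Finset.prod_nonneg fun p _ => hf0 p)
      (Finset.prod_nonneg fun p _ => by linarith [hf1 p])
  rw [← Finset.sum_fiberwise_of_maps_to (g := wit n)
    (t := Finset.univ.filter (fun a : Fin (n + 2) → Fin (n + 2) => Gful n a))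
    (fun G _ => Finset.mem_filter.2 ⟨Finset.mem_univ _, Gful_wit n G⟩)]
  apply Finset.sum_le_sum
  intro a ha
  rw [Finset.mem_filter] at ha
  calc ∑ G ∈ (Finset.univ.filter
          (fun G : SimpleGraph (Fin (n + 2)) => G.Connected)).filter (fun G => wit n G = a),
          (∏ p ∈ EP G, f p) * ∏ p ∈ NEP G, (1 - f p)
      ≤ ∑ H ∈ Finset.univ.filter (fun H : SimpleGraph (Fin (n + 2)) => treeGraph n a ≤ H),
          (∏ p ∈ EP H, f p) * ∏ p ∈ NEP H, (1 - f p) := by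
        apply Finset.sum_le_sum_of_subset_of_nonneg
        · intro G hG
          rw [Finset.mem_filter, Finset.mem_filter] at hG
          rcases hG with ⟨⟨_, hconn⟩, hwit⟩
          refine Finset.mem_filter.2 ⟨Finset.mem_univ _, ?_⟩
          subst hwit
          exact treeGraph_le (Gful_wit n G) (adj_wit hconn)
        · exact fun H _ _ => hW0 H
    _ = (∏ p ∈ EP (treeGraph n a), f p) * ∏ p ∈ NEP (treeGraph n a), (f p + (1 - f p)) :=
        sum_supergraphs_two (treeGraph n a) f (fun p => 1 - f p)
    _ = ∏ p ∈ EP (treeGraph n a), f p := by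
        rw [show ∏ p ∈ NEP (treeGraph n a), (f p + (1 - f p))
            = ∏ _p ∈ NEP (treeGraph n a), (1 : ℝ) from
          Finset.prod_congr rfl fun p _ => by ring]
        rw [Finset.prod_const_one, mul_one]
    _ = ∏ v ∈ Finset.univ.filter (fun v : Fin (n + 2) => v ≠ 0), f (v, a v) :=
        prod_EP_tree ha.2 f hsym

end PfunAux

namespace PfunAux

lemma pow_self_le_fact (k : ℕ) : (k : ℝ) ^ k ≤ 3 ^ k * k.factorial := by
  have hfpos : (0 : ℝ) < (k.factorial : ℝ) := by
    exact_mod_cast k.factorial_pos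
  have hterm : (k : ℝ) ^ k / k.factorial
      ≤ ∑ i ∈ Finset.range (k + 1), (k : ℝ) ^ i / i.factorial := by
    refine Finset.single_le_sum (f := fun i => (k : ℝ) ^ i / i.factorial) ?_ ?_
    · intro i _
      positivity
    · exact Finset.self_mem_range_succ k
  have hs := Real.sum_le_exp_of_nonneg (Nat.cast_nonneg k) (k + 1)
  have hexp : Real.exp (k : ℝ) ≤ 3 ^ k := by
    have h3 : Real.exp 1 ≤ 3 := le_of_lt (lt_trans Real.exp_one_lt_d9 (by norm_num))
    calc Real.exp (k : ℝ) = Real.exp 1 ^ k := by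
          rw [← Real.exp_nat_mul]
          norm_num
      _ ≤ 3 ^ k := pow_le_pow_left₀ (Real.exp_pos 1).le h3 k
  have := (hterm.trans hs).trans hexp
  rw [div_le_iff₀ hfpos] at this
  linarith

lemma quad_le_geom (n : ℕ) : ((n : ℝ) + 2) * ((n : ℝ) + 1) ≤ 2 * 4 ^ n := by
  induction n with
  | zero => norm_num
  | succ n ih =>
    have h4 : (0 : ℝ) ≤ 4 ^ n := by positivity
    push_cast
    rw [pow_succ]
    nlinarith

lemma main_fact_bound (n : ℕ) :
    ((n : ℝ) + 2) ^ (n + 2) ≤ 18 * 12 ^ n * n.factorial := by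
  have h1 := pow_self_le_fact (n + 2)
  push_cast at h1
  have h2 : (((n + 2).factorial : ℕ) : ℝ) = ((n : ℝ) + 2) * ((n : ℝ) + 1) * n.factorial := by
    rw [Nat.factorial_succ, Nat.factorial_succ]
    push_cast
    ring
  rw [h2] at h1
  have h3 := quad_le_geom n
  have hf : (0 : ℝ) ≤ (n.factorial : ℝ) := Nat.cast_nonneg _
  have h12 : (12 : ℝ) ^ n = 3 ^ n * 4 ^ n := by
    rw [← mul_pow]; norm_num
  calc ((n : ℝ) + 2) ^ (n + 2)
      ≤ 3 ^ (n + 2) * (((n : ℝ) + 2) * ((n : ℝ) + 1) * n.factorial) := h1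
    _ ≤ 3 ^ (n + 2) * (2 * 4 ^ n * n.factorial) := by
        have h30 : (0 : ℝ) ≤ 3 ^ (n + 2) := by positivity
        have := mul_le_mul_of_nonneg_right h3 hf
        nlinarith
    _ = 18 * 12 ^ n * n.factorial := by
        rw [pow_add, h12]
        ring

end PfunAux

namespace PfunAux

lemma measurable_pts_left {d n : ℕ} :
    Measurable fun x : EuclideanSpace ℝ (Fin d) =>
      pts x (fun _ : Fin n => (0 : EuclideanSpace ℝ (Fin d))) := by
  apply measurable_pi_lambda
  intro v
  induction v using Fin.cases with
  | zero => simp only [pts_zero]; exact measurable_const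
  | succ j =>
    induction j using Fin.lastCases with
    | last => simp only [Fin.succ_last, pts_last]; exact measurable_id
    | cast i => simp only [pts_interior]; exact measurable_const

end PfunAux

open PfunAux in
theorem pFun_norm_bounds' :
    ∃ c₁ c₂ : ℕ → ℝ → ℝ,
      ∀ (d : ℕ), 1 ≤ d →
        ∀ φ : EuclideanSpace ℝ (Fin d) → ℝ,
          Measurable φ → (∀ x, φ x ∈ Set.Icc (0 : ℝ) 1) → (∀ x, φ (-x) = φ x) →
          Integrable φ → 0 < ∫ x, φ x →
          0 < c₁ d (∫ x, φ x) ∧ 0 < c₂ d (∫ x, φ x) ∧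
          ∀ n : ℕ,
            eLpNorm (pFun φ n) ⊤ volume ≤
              ENNReal.ofReal (c₁ d (∫ x, φ x) * c₂ d (∫ x, φ x) ^ n) ∧
            eLpNorm (pFun φ n) 1 volume ≤
              ENNReal.ofReal (c₁ d (∫ x, φ x) * c₂ d (∫ x, φ x) ^ n) := by
  refine ⟨fun _ m => 18 * max m 1, fun _ m => 24 * max m 1, ?_⟩
  intro d hd φ hφm hφIcc hφeven hφint hφpos
  set m := ∫ x, φ x with hm_def
  have hm0 : 0 ≤ m := le_of_lt hφpos
  have hmax1 : (1 : ℝ) ≤ max m 1 := le_max_right _ _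
  have hmaxm : m ≤ max m 1 := le_max_left _ _
  have hmax0 : (0 : ℝ) < max m 1 := lt_of_lt_of_le one_pos hmax1
  refine ⟨by dsimp only; nlinarith, by dsimp only; nlinarith, ?_⟩
  intro n
  -- the target bound
  have hTb : 18 * max m 1 * (24 * max m 1) ^ n = 18 * 24 ^ n * max m 1 ^ (n + 1) := by
    rw [mul_pow]; ring
  have hTn : 18 * 24 ^ n * m ^ n ≤ 18 * max m 1 * (24 * max m 1) ^ n := by
    rw [hTb]
    have h1 : m ^ n ≤ max m 1 ^ n := pow_le_pow_left₀ hm0 hmaxm n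
    have h2 : max m 1 ^ n ≤ max m 1 ^ (n + 1) := pow_le_pow_right₀ hmax1 (Nat.le_succ n)
    have h3 : (0:ℝ) ≤ 18 * 24 ^ n := by positivity
    nlinarith [h1.trans h2]
  have hTn1 : 18 * 24 ^ n * m ^ (n + 1) ≤ 18 * max m 1 * (24 * max m 1) ^ n := by
    rw [hTb]
    have h1 : m ^ (n + 1) ≤ max m 1 ^ (n + 1) := pow_le_pow_left₀ hm0 hmaxm (n + 1)
    have h3 : (0:ℝ) ≤ 18 * 24 ^ n := by positivity
    nlinarith
  -- setup
  set ψ : EuclideanSpace ℝ (Fin d) → ℝ≥0∞ := fun z => ENNReal.ofReal (φ z) with hψ_def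
  have hψm : Measurable ψ := ENNReal.measurable_ofReal.comp hφm
  have hψ1 : ∀ z, ψ z ≤ 1 := by
    intro z
    calc ψ z ≤ ENNReal.ofReal 1 := ENNReal.ofReal_le_ofReal (hφIcc z).2
      _ = 1 := ENNReal.ofReal_one
  have hM : (∫⁻ z, ψ z) = ENNReal.ofReal m :=
    (ofReal_integral_eq_lintegral_ofReal hφint
      (Filter.Eventually.of_forall fun z => (hφIcc z).1)).symm
  have hMtop : (∫⁻ z, ψ z) ≠ ⊤ := by rw [hM]; exact ENNReal.ofReal_ne_top
  set K₀ : Finset (Fin (n + 2)) := Finset.univ.filter (fun v : Fin (n + 2) => v ≠ 0) with hK₀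
  set A : Finset (Fin (n + 2) → Fin (n + 2)) :=
    Finset.univ.filter (fun a => Gful n a) with hA
  have hsubK : interiorVerts n ⊆ K₀ := fun v hv =>
    Finset.mem_filter.2 ⟨Finset.mem_univ _, (mem_interiorVerts.1 hv).1⟩
  have hlast0 : (Fin.last (n + 1) : Fin (n + 2)) ≠ 0 := by
    intro h
    have := congrArg Fin.val h
    simp [Fin.last] at this
  -- per-witness integral bounds
  have hGa : ∀ a, Gful n a → ∀ x,
      (∫⋯∫⁻_(interiorVerts n), Fk ψ a K₀) (pts x fun _ => 0) ≤ ENNReal.ofReal m ^ n := by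
    intro a ha x
    have := lmarginal_Fk_le hψm hψ1 hMtop ha n (interiorVerts n) K₀
      (card_interiorVerts n) hsubK (zero_not_mem_interior n) (pts x fun _ => 0)
    rwa [hM] at this
  have hGa1 : ∀ a, Gful n a →
      ∫⁻ x, (∫⋯∫⁻_(interiorVerts n), Fk ψ a K₀) (pts x fun _ => 0)
        ≤ ENNReal.ofReal m ^ (n + 1) := by
    intro a ha
    have he : ∫⁻ x, (∫⋯∫⁻_(interiorVerts n), Fk ψ a K₀) (pts x fun _ => 0)
        = ∫⁻ x, ∫⁻ xs, Fk ψ a K₀ (pts x xs) :=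
      lintegral_congr fun x => (lintegral_pts n _ (measurable_Fk hψm a K₀) x).symm
    rw [he, lintegral_lintegral_pts n _ (measurable_Fk hψm a K₀)]
    have hcard : (insert (Fin.last (n + 1)) (interiorVerts n)).card = n + 1 := by
      rw [Finset.card_insert_of_notMem (last_not_mem_interior n), card_interiorVerts]
    have hsub : insert (Fin.last (n + 1)) (interiorVerts n) ⊆ K₀ := by
      intro v hv
      rcases Finset.mem_insert.1 hv with h | h
      · subst h; exact Finset.mem_filter.2 ⟨Finset.mem_univ _, hlast0⟩
      · exact hsubK h
    have h0 : (0 : Fin (n + 2)) ∉ insert (Fin.last (n + 1)) (interiorVerts n) := by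
      rw [Finset.mem_insert]
      push_neg
      exact ⟨fun h => hlast0 h.symm, zero_not_mem_interior n⟩
    have := lmarginal_Fk_le hψm hψ1 hMtop ha (n + 1) _ K₀ hcard hsub h0 (fun _ => 0)
    rwa [hM] at this
  -- conversions between real products and Fk
  have hTP0 : ∀ (a : Fin (n + 2) → Fin (n + 2)) (y : Fin (n + 2) → EuclideanSpace ℝ (Fin d)),
      0 ≤ ∏ v ∈ K₀, φ (y v - y (a v)) :=
    fun a y => Finset.prod_nonneg fun v _ => (hφIcc _).1
  have hofTP : ∀ (a : Fin (n + 2) → Fin (n + 2)) (y : Fin (n + 2) → EuclideanSpace ℝ (Fin d)),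
      ENNReal.ofReal (∏ v ∈ K₀, φ (y v - y (a v))) = Fk ψ a K₀ y := by
    intro a y
    rw [ofReal_prod' _ _ (fun v _ => (hφIcc _).1)]
    rfl
  have hsymφ : ∀ (y : Fin (n + 2) → EuclideanSpace ℝ (Fin d)) (u v : Fin (n + 2)),
      φ (y u - y v) = φ (y v - y u) := by
    intro y u v
    rw [show y v - y u = -(y u - y v) from (neg_sub _ _).symm, hφeven]
  -- edge product bounded by tree product
  have hedge : ∀ (H : SimpleGraph (Fin (n + 2))), H.Connected →
      ∀ y : Fin (n + 2) → EuclideanSpace ℝ (Fin d),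
      edgeProd φ H y ≤ ∏ v ∈ K₀, φ (y v - y (wit n H v)) := by
    intro H hH y
    have htle : treeGraph n (wit n H) ≤ H := treeGraph_le (Gful_wit n H) (adj_wit hH)
    have hsub2 : EP (treeGraph n (wit n H)) ⊆ EP H := EP_mono htle
    rw [edgeProd_eq, ← Finset.prod_sdiff hsub2]
    have h1 : ∏ p ∈ EP H \ EP (treeGraph n (wit n H)), φ (y p.1 - y p.2) ≤ 1 :=
      Finset.prod_le_one (fun p _ => (hφIcc _).1) (fun p _ => (hφIcc _).2)
    have h2 : (0:ℝ) ≤ ∏ p ∈ EP (treeGraph n (wit n H)), φ (y p.1 - y p.2) :=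
      Finset.prod_nonneg fun p _ => (hφIcc _).1
    have h3 : ∏ p ∈ EP (treeGraph n (wit n H)), φ (y p.1 - y p.2)
        = ∏ v ∈ K₀, φ (y v - y (wit n H v)) :=
      prod_EP_tree (Gful_wit n H) (fun p => φ (y p.1 - y p.2)) (fun u v => hsymφ y u v)
    rw [← h3]
    calc (∏ p ∈ EP H \ EP (treeGraph n (wit n H)), φ (y p.1 - y p.2))
          * ∏ p ∈ EP (treeGraph n (wit n H)), φ (y p.1 - y p.2)
        ≤ 1 * ∏ p ∈ EP (treeGraph n (wit n H)), φ (y p.1 - y p.2) :=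
          mul_le_mul_of_nonneg_right h1 h2
      _ = _ := one_mul _
  -- integrability of the edge products
  have hIntH : ∀ (x : EuclideanSpace ℝ (Fin d)) (H : SimpleGraph (Fin (n + 2))), H.Connected →
      Integrable (fun xs : Fin n → EuclideanSpace ℝ (Fin d) => edgeProd φ H (pts x xs)) := by
    intro x H hH
    have hmeas : Measurable (fun xs : Fin n → EuclideanSpace ℝ (Fin d) =>
        edgeProd φ H (pts x xs)) := by
      simp only [edgeProd]
      apply Finset.measurable_prod
      intro p _
      exact hφm.comp ((measurable_pts_apply x p.1).sub (measurable_pts_apply x p.2))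
    refine ⟨hmeas.aestronglyMeasurable, ?_⟩
    rw [hasFiniteIntegral_iff_ofReal (Filter.Eventually.of_forall fun xs =>
      show (0:ℝ) ≤ edgeProd φ H (pts x xs) from
        Finset.prod_nonneg fun p _ => (hφIcc _).1)]
    calc ∫⁻ xs, ENNReal.ofReal (edgeProd φ H (pts x xs))
        ≤ ∫⁻ xs, Fk ψ (wit n H) K₀ (pts x xs) := lintegral_mono fun xs => by
          rw [← hofTP]
          exact ENNReal.ofReal_le_ofReal (hedge H hH (pts x xs))
      _ = (∫⋯∫⁻_(interiorVerts n), Fk ψ (wit n H) K₀) (pts x fun _ => 0) :=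
          lintegral_pts n _ (measurable_Fk hψm _ K₀) x
      _ ≤ ENNReal.ofReal m ^ n := hGa _ (Gful_wit n H) x
      _ < ⊤ := ENNReal.pow_lt_top ENNReal.ofReal_lt_top
  -- the pointwise absolute-value bound
  have hWnn : ∀ (G : SimpleGraph (Fin (n + 2))) (y : Fin (n + 2) → EuclideanSpace ℝ (Fin d)),
      0 ≤ (∏ p ∈ EP G, φ (y p.1 - y p.2)) * ∏ p ∈ NEP G, (1 - φ (y p.1 - y p.2)) :=
    fun G y => mul_nonneg (Finset.prod_nonneg fun p _ => (hφIcc _).1)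
      (Finset.prod_nonneg fun p _ => by linarith [(hφIcc (y p.1 - y p.2)).2])
  have habs : ∀ y : Fin (n + 2) → EuclideanSpace ℝ (Fin d),
      |∑ G ∈ Finset.univ.filter (fun G : SimpleGraph (Fin (n + 2)) => G.Connected),
          (piFun n G : ℝ) * ((∏ p ∈ EP G, φ (y p.1 - y p.2))
            * ∏ p ∈ NEP G, (1 - φ (y p.1 - y p.2)))|
        ≤ 2 ^ n * ∑ a ∈ A, ∏ v ∈ K₀, φ (y v - y (a v)) := by
    intro y
    calc |∑ G ∈ Finset.univ.filter (fun G : SimpleGraph (Fin (n + 2)) => G.Connected),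
          (piFun n G : ℝ) * ((∏ p ∈ EP G, φ (y p.1 - y p.2))
            * ∏ p ∈ NEP G, (1 - φ (y p.1 - y p.2)))|
        ≤ ∑ G ∈ Finset.univ.filter (fun G : SimpleGraph (Fin (n + 2)) => G.Connected),
          |(piFun n G : ℝ) * ((∏ p ∈ EP G, φ (y p.1 - y p.2))
            * ∏ p ∈ NEP G, (1 - φ (y p.1 - y p.2)))| := Finset.abs_sum_le_sum_abs _ _
      _ ≤ ∑ G ∈ Finset.univ.filter (fun G : SimpleGraph (Fin (n + 2)) => G.Connected),
          2 ^ n * ((∏ p ∈ EP G, φ (y p.1 - y p.2))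
            * ∏ p ∈ NEP G, (1 - φ (y p.1 - y p.2))) := by
          apply Finset.sum_le_sum
          intro G _
          rw [abs_mul, abs_of_nonneg (hWnn G y)]
          apply mul_le_mul_of_nonneg_right _ (hWnn G y)
          have h := abs_piFun_le n G
          calc |(piFun n G : ℝ)| = ((|piFun n G| : ℤ) : ℝ) := by
                rw [Int.cast_abs]
            _ ≤ ((2 ^ n : ℤ) : ℝ) := by exact_mod_cast h
            _ = 2 ^ n := by push_cast; ring
      _ = 2 ^ n * ∑ G ∈ Finset.univ.filter
            (fun G : SimpleGraph (Fin (n + 2)) => G.Connected),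
            (∏ p ∈ EP G, φ (y p.1 - y p.2)) * ∏ p ∈ NEP G, (1 - φ (y p.1 - y p.2)) := by
          rw [Finset.mul_sum]
      _ ≤ 2 ^ n * ∑ a ∈ A, ∏ v ∈ K₀, φ (y v - y (a v)) := by
          apply mul_le_mul_of_nonneg_left _ (by positivity)
          exact sum_W_le_sum_tree n (fun p => φ (y p.1 - y p.2))
            (fun p => (hφIcc _).1) (fun p => (hφIcc _).2) (fun u v => hsymφ y u v)
  -- the per-x key bound
  have keyx : ∀ x : EuclideanSpace ℝ (Fin d), (‖pFun φ n x‖₊ : ℝ≥0∞)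
      ≤ ENNReal.ofReal ((n.factorial : ℝ))⁻¹ *
        (2 ^ n * ∑ a ∈ A, (∫⋯∫⁻_(interiorVerts n), Fk ψ a K₀) (pts x fun _ => 0)) := by
    intro x
    rw [pFun, nnnorm_mul, ENNReal.coe_mul, ← enorm_eq_nnnorm ((n.factorial : ℝ))⁻¹,
      Real.enorm_eq_ofReal (by positivity : (0:ℝ) ≤ ((n.factorial : ℝ))⁻¹)]
    apply mul_le_mul_right
    have hrew : ∑ H ∈ Finset.univ.filter
          (fun H : SimpleGraph (Fin (n + 2)) => H.Connected),
          (kappaFun n H : ℝ) * Jfun φ n H x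
        = ∫ xs : Fin n → EuclideanSpace ℝ (Fin d),
            ∑ G ∈ Finset.univ.filter (fun G : SimpleGraph (Fin (n + 2)) => G.Connected),
              (piFun n G : ℝ) * ((∏ p ∈ EP G, φ (pts x xs p.1 - pts x xs p.2))
                * ∏ p ∈ NEP G, (1 - φ (pts x xs p.1 - pts x xs p.2))) := by
      have e1 : ∀ H ∈ Finset.univ.filter
          (fun H : SimpleGraph (Fin (n + 2)) => H.Connected),
          (kappaFun n H : ℝ) * Jfun φ n H x
            = ∫ xs, (kappaFun n H : ℝ) * edgeProd φ H (pts x xs) := by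
        intro H _
        rw [Jfun, MeasureTheory.integral_const_mul]
      rw [Finset.sum_congr rfl e1,
        ← integral_finset_sum _ (fun H hH => (hIntH x H (Finset.mem_filter.1 hH).2).const_mul _)]
      apply integral_congr_ae (Filter.Eventually.of_forall fun xs => ?_)
      have := kappa_sum_eq n (fun p => φ (pts x xs p.1 - pts x xs p.2))
      simpa [edgeProd_eq] using this
    rw [hrew]
    calc (‖∫ xs : Fin n → EuclideanSpace ℝ (Fin d),
            ∑ G ∈ Finset.univ.filter (fun G : SimpleGraph (Fin (n + 2)) => G.Connected),
              (piFun n G : ℝ) * ((∏ p ∈ EP G, φ (pts x xs p.1 - pts x xs p.2))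
                * ∏ p ∈ NEP G, (1 - φ (pts x xs p.1 - pts x xs p.2)))‖₊ : ℝ≥0∞)
        ≤ ∫⁻ xs, ‖∑ G ∈ Finset.univ.filter
              (fun G : SimpleGraph (Fin (n + 2)) => G.Connected),
              (piFun n G : ℝ) * ((∏ p ∈ EP G, φ (pts x xs p.1 - pts x xs p.2))
                * ∏ p ∈ NEP G, (1 - φ (pts x xs p.1 - pts x xs p.2)))‖₊ :=
          enorm_integral_le_lintegral_enorm _
      _ ≤ ∫⁻ xs, 2 ^ n * ∑ a ∈ A, Fk ψ a K₀ (pts x xs) := by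
          apply lintegral_mono
          intro xs
          dsimp only
          rw [← enorm_eq_nnnorm, Real.enorm_eq_ofReal_abs]
          refine le_trans (ENNReal.ofReal_le_ofReal (habs (pts x xs))) (le_of_eq ?_)
          rw [ENNReal.ofReal_mul (by positivity),
            ENNReal.ofReal_sum_of_nonneg (fun a _ => hTP0 a _)]
          congr 1
          · rw [ENNReal.ofReal_pow (by norm_num : (0:ℝ) ≤ 2), ENNReal.ofReal_ofNat]
          · exact Finset.sum_congr rfl fun a _ => hofTP a _
      _ = 2 ^ n * ∑ a ∈ A, ∫⁻ xs, Fk ψ a K₀ (pts x xs) := by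
          rw [lintegral_const_mul' _ _ (ENNReal.pow_ne_top ENNReal.ofNat_ne_top),
            lintegral_finset_sum (f := fun a xs => Fk ψ a K₀ (pts x xs)) A
              (fun a _ => ((measurable_Fk hψm a K₀).comp
                (measurable_pi_lambda _ (measurable_pts_apply x)) :
                  Measurable fun xs => Fk ψ a K₀ (pts x xs)))]
      _ = 2 ^ n * ∑ a ∈ A, (∫⋯∫⁻_(interiorVerts n), Fk ψ a K₀) (pts x fun _ => 0) := by
          congr 1
          exact Finset.sum_congr rfl fun a _ => lintegral_pts n _ (measurable_Fk hψm a K₀) x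
  -- counting
  have cardA : (A.card : ℝ) ≤ ((n : ℝ) + 2) ^ (n + 2) := by
    have h1 : A.card ≤ Fintype.card (Fin (n + 2) → Fin (n + 2)) := by
      rw [← Finset.card_univ]
      exact Finset.card_filter_le _ _
    have h2 : Fintype.card (Fin (n + 2) → Fin (n + 2)) = (n + 2) ^ (n + 2) := by
      rw [Fintype.card_fun, Fintype.card_fin]
    calc (A.card : ℝ) ≤ (((n + 2) ^ (n + 2) : ℕ) : ℝ) := by exact_mod_cast h1.trans_eq h2
      _ = ((n : ℝ) + 2) ^ (n + 2) := by push_cast; ring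
  have hfne : ((n.factorial : ℝ)) ≠ 0 := by
    have : (0:ℝ) < n.factorial := by exact_mod_cast n.factorial_pos
    linarith
  have hD : ∀ j : ℕ, ((n.factorial : ℝ))⁻¹ * (2 ^ n * ((A.card : ℝ) * m ^ j))
      ≤ 18 * 24 ^ n * m ^ j := by
    intro j
    have hmb := main_fact_bound n
    have hAle : (A.card : ℝ) ≤ 18 * 12 ^ n * n.factorial := cardA.trans hmb
    have hfpos : (0:ℝ) < (n.factorial : ℝ) := by exact_mod_cast n.factorial_pos
    have hmj : (0:ℝ) ≤ m ^ j := by positivity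
    calc ((n.factorial : ℝ))⁻¹ * (2 ^ n * ((A.card : ℝ) * m ^ j))
        ≤ ((n.factorial : ℝ))⁻¹ * (2 ^ n * ((18 * 12 ^ n * n.factorial) * m ^ j)) := by
          have h2n : (0:ℝ) ≤ 2 ^ n := by positivity
          have hinv : (0:ℝ) ≤ ((n.factorial : ℝ))⁻¹ := by positivity
          apply mul_le_mul_of_nonneg_left _ hinv
          apply mul_le_mul_of_nonneg_left _ h2n
          exact mul_le_mul_of_nonneg_right hAle hmj
      _ = 18 * (2 ^ n * 12 ^ n) * m ^ j * (((n.factorial : ℝ))⁻¹ * n.factorial) := by ring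
      _ = 18 * 24 ^ n * m ^ j := by
          rw [inv_mul_cancel₀ hfne, ← mul_pow]
          norm_num
  -- combining, in ℝ≥0∞
  have hcomb : ∀ j : ℕ,
      ENNReal.ofReal ((n.factorial : ℝ))⁻¹ * (2 ^ n * ((A.card : ℝ≥0∞) * ENNReal.ofReal m ^ j))
        = ENNReal.ofReal (((n.factorial : ℝ))⁻¹ * (2 ^ n * ((A.card : ℝ) * m ^ j))) := by
    intro j
    rw [ENNReal.ofReal_mul (by positivity : (0:ℝ) ≤ ((n.factorial : ℝ))⁻¹),
      ENNReal.ofReal_mul (by positivity : (0:ℝ) ≤ (2:ℝ) ^ n),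
      ENNReal.ofReal_mul (Nat.cast_nonneg _),
      ENNReal.ofReal_pow hm0, ENNReal.ofReal_natCast,
      ENNReal.ofReal_pow (by norm_num : (0:ℝ) ≤ 2), ENNReal.ofReal_ofNat]
  constructor
  -- L^∞ bound
  · have keyx2 : ∀ x : EuclideanSpace ℝ (Fin d),
        (‖pFun φ n x‖₊ : ℝ≥0∞) ≤ ENNReal.ofReal (18 * 24 ^ n * m ^ n) := by
      intro x
      refine (keyx x).trans ?_
      calc ENNReal.ofReal ((n.factorial : ℝ))⁻¹ *
            (2 ^ n * ∑ a ∈ A, (∫⋯∫⁻_(interiorVerts n), Fk ψ a K₀) (pts x fun _ => 0))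
          ≤ ENNReal.ofReal ((n.factorial : ℝ))⁻¹ *
            (2 ^ n * ((A.card : ℝ≥0∞) * ENNReal.ofReal m ^ n)) := by
            apply mul_le_mul_right
            apply mul_le_mul_right
            have := Finset.sum_le_card_nsmul A _ (ENNReal.ofReal m ^ n)
              (fun a ha => hGa a (Finset.mem_filter.1 ha).2 x)
            rwa [nsmul_eq_mul] at this
        _ = ENNReal.ofReal (((n.factorial : ℝ))⁻¹ * (2 ^ n * ((A.card : ℝ) * m ^ n))) := hcomb n
        _ ≤ ENNReal.ofReal (18 * 24 ^ n * m ^ n) := ENNReal.ofReal_le_ofReal (hD n)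
    have hnorm : ∀ x, ‖pFun φ n x‖ ≤ 18 * 24 ^ n * m ^ n := by
      intro x
      have h := keyx2 x
      rw [← enorm_eq_nnnorm, ← ofReal_norm_eq_enorm] at h
      exact (ENNReal.ofReal_le_ofReal_iff (by positivity)).1 h
    rw [eLpNorm_exponent_top]
    refine (eLpNormEssSup_le_of_ae_bound (Filter.Eventually.of_forall hnorm)).trans ?_
    exact ENNReal.ofReal_le_ofReal hTn
  -- L^1 bound
  · rw [eLpNorm_one_eq_lintegral_enorm]
    have hmeas_a : ∀ a : Fin (n + 2) → Fin (n + 2),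
        Measurable fun x : EuclideanSpace ℝ (Fin d) =>
          (∫⋯∫⁻_(interiorVerts n), Fk ψ a K₀) (pts x fun _ => 0) :=
      fun a => (Measurable.lmarginal _ (measurable_Fk hψm a K₀)).comp measurable_pts_left
    calc ∫⁻ x, (‖pFun φ n x‖₊ : ℝ≥0∞)
        ≤ ∫⁻ x, ENNReal.ofReal ((n.factorial : ℝ))⁻¹ *
            (2 ^ n * ∑ a ∈ A, (∫⋯∫⁻_(interiorVerts n), Fk ψ a K₀) (pts x fun _ => 0)) :=
          lintegral_mono keyx
      _ = ENNReal.ofReal ((n.factorial : ℝ))⁻¹ *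
            (2 ^ n * ∑ a ∈ A, ∫⁻ x, (∫⋯∫⁻_(interiorVerts n), Fk ψ a K₀)
              (pts x fun _ => 0)) := by
          rw [lintegral_const_mul' _ _ ENNReal.ofReal_ne_top,
            lintegral_const_mul' _ _ (ENNReal.pow_ne_top ENNReal.ofNat_ne_top),
            lintegral_finset_sum _ (fun a _ => hmeas_a a)]
      _ ≤ ENNReal.ofReal ((n.factorial : ℝ))⁻¹ *
            (2 ^ n * ((A.card : ℝ≥0∞) * ENNReal.ofReal m ^ (n + 1))) := by
          apply mul_le_mul_right
          apply mul_le_mul_right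
          have := Finset.sum_le_card_nsmul A _ (ENNReal.ofReal m ^ (n + 1))
            (fun a ha => hGa1 a (Finset.mem_filter.1 ha).2)
          rwa [nsmul_eq_mul] at this
      _ = ENNReal.ofReal (((n.factorial : ℝ))⁻¹ * (2 ^ n * ((A.card : ℝ) * m ^ (n + 1)))) :=
          hcomb (n + 1)
      _ ≤ ENNReal.ofReal (18 * max m 1 * (24 * max m 1) ^ n) :=
          ENNReal.ofReal_le_ofReal ((hD (n + 1)).trans hTn1)
/-- The coefficients `p_n` of the expansion of the pair-connectedness function of the
random connection model at `t = 0` satisfy `‖p_n‖∞ ≤ c₁ c₂ⁿ` and `‖p_n‖₁ ≤ c₁ c₂ⁿ`,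
with constants `c₁, c₂ > 0` depending only on `d` and `m_φ = ∫ φ`. -/
theorem pFun_norm_bounds :
    ∃ c₁ c₂ : ℕ → ℝ → ℝ,
      ∀ (d : ℕ), 1 ≤ d →
        ∀ φ : EuclideanSpace ℝ (Fin d) → ℝ,
          Measurable φ → (∀ x, φ x ∈ Set.Icc (0 : ℝ) 1) → (∀ x, φ (-x) = φ x) →
          Integrable φ → 0 < ∫ x, φ x →
          0 < c₁ d (∫ x, φ x) ∧ 0 < c₂ d (∫ x, φ x) ∧
          ∀ n : ℕ,
            eLpNorm (pFun φ n) ⊤ volume ≤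
              ENNReal.ofReal (c₁ d (∫ x, φ x) * c₂ d (∫ x, φ x) ^ n) ∧
            eLpNorm (pFun φ n) 1 volume ≤
              ENNReal.ofReal (c₁ d (∫ x, φ x) * c₂ d (∫ x, φ x) ^ n) := by
  exact pFun_norm_bounds'

end
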